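/- arXiv:math/0408359 — 2 statements merged into one kernel-verified Lean document; each statement's English description precedes it below -/
import Mathlib

section
/- Let p be an odd prime. For a, b ∈ Z/pZ with a·b·(a+2b) ≢ 0 mod p set λ_{a,b}(p) = -p^{-1/2} Σ_{x mod p}((x(x-a)(x+2b))/p), and set λ_{a,b}(p²) = λ_{a,b}(p)² - 1 in that case; if a·b·(a+2b) ≡ 0 mod p (but not both a ≡ 0 and b ≡ 0) set λ_{a,b}(p²) = λ_{a,b}(p)², and set λ_{0,0}(p²) = 0. Then Σ_{a mod p} Σ_{b mod p} λ_{a,b}(p²) = 0, where one also uses that for a·b·(a+2b) ≡ 0 mod p with (a,b) ≠ (0,0), p·λ_{a,b}(p)² = 1. -/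
open Finset

namespace Stmt3Aux

variable (p : ℕ) [Fact p.Prime]

/-- The real-valued quadratic character mod `p`. -/
noncomputable def χ : MulChar (ZMod p) ℝ :=
  (quadraticChar (ZMod p)).ringHomComp (Int.castRingHom ℝ)

lemma chi_apply (z : ZMod p) : χ p z = ((quadraticChar (ZMod p) z : ℤ) : ℝ) := rfl

lemma chi_zero : χ p 0 = 0 := by
  rw [chi_apply]
  norm_num

lemma chi_sq {u : ZMod p} (hu : u ≠ 0) : χ p u * χ p u = 1 := by
  have h := quadraticChar_sq_one hu
  rw [chi_apply, ← Int.cast_mul, ← sq, h]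
  norm_num

lemma leg_eq (z : ZMod p) : (legendreSym p z.val : ℝ) = χ p z := by
  rw [chi_apply, legendreSym]
  congr 2
  push_cast
  simp [ZMod.natCast_val, ZMod.cast_id]

variable (hp : p ≠ 2)

include hp

lemma ringChar_ne : ringChar (ZMod p) ≠ 2 := by
  rw [ZMod.ringChar_zmod_n]; exact hp

lemma two_ne_zero' : (2 : ZMod p) ≠ 0 := by
  have h := Fact.out (p := p.Prime)
  intro h0
  have : ((2 : ℕ) : ZMod p) = 0 := by exact_mod_cast h0
  rw [ZMod.natCast_eq_zero_iff] at this
  exact hp ((Nat.prime_dvd_prime_iff_eq h Nat.prime_two).mp this)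

lemma chi_sum : ∑ u : ZMod p, χ p u = 0 := by
  have h := quadraticChar_sum_zero (ringChar_ne p hp)
  calc ∑ u : ZMod p, χ p u = ((∑ u : ZMod p, (quadraticChar (ZMod p) u : ℤ) : ℤ) : ℝ) := by
        push_cast [chi_apply]; rfl
    _ = 0 := by exact_mod_cast congrArg (fun n : ℤ => (n : ℝ)) (by exact_mod_cast h)

lemma chi_sum_erase_one : ∑ v ∈ Finset.univ.erase (1 : ZMod p), χ p v = -1 := by
  have h := Finset.add_sum_erase Finset.univ (χ p) (Finset.mem_univ (1 : ZMod p))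
  rw [chi_sum p hp] at h
  have h1 : χ p 1 = 1 := map_one (χ p)
  linarith [h]

omit hp in
lemma sum_ind_ne (c : ZMod p) :
    ∑ u : ZMod p, (if u = c then (0 : ℝ) else 1) = (p : ℝ) - 1 := by
  have e : ∀ u : ZMod p, (if u = c then (0 : ℝ) else 1)
      = 1 - (if u = c then (1 : ℝ) else 0) := by
    intro u; by_cases hu : u = c <;> simp [hu]
  rw [Finset.sum_congr rfl (fun u _ => e u), Finset.sum_sub_distrib,
    Finset.sum_ite_eq' Finset.univ c (fun _ => (1 : ℝ))]
  simp [Finset.card_univ, ZMod.card]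

/-- Lemma A: the shifted quadratic character sum. -/
lemma chiA (d : ZMod p) (hd : d ≠ 0) : ∑ u : ZMod p, χ p u * χ p (u + d) = -1 := by
  have h0 : χ p 0 * χ p (0 + d) = 0 := by rw [chi_zero]; ring
  rw [← Finset.add_sum_erase Finset.univ _ (Finset.mem_univ (0 : ZMod p)), h0, zero_add]
  have step : ∀ u ∈ Finset.univ.erase (0 : ZMod p),
      χ p u * χ p (u + d) = χ p (1 + d * u⁻¹) := by
    intro u hu
    have hu0 : u ≠ 0 := (Finset.mem_erase.mp hu).1
    have : u + d = u * (1 + d * u⁻¹) := by field_simp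
    rw [this, map_mul, ← mul_assoc, chi_sq p hu0, one_mul]
  rw [Finset.sum_congr rfl step]
  rw [show (-1 : ℝ) = ∑ v ∈ Finset.univ.erase (1 : ZMod p), χ p v from
    (chi_sum_erase_one p hp).symm]
  refine Finset.sum_nbij' (fun u => 1 + d * u⁻¹) (fun v => d * (v - 1)⁻¹) ?_ ?_ ?_ ?_ ?_
  · intro u hu
    have hu0 : u ≠ 0 := (Finset.mem_erase.mp hu).1
    simp only [Finset.mem_erase, Finset.mem_univ, and_true]
    intro h
    have : d * u⁻¹ = 0 := by linear_combination h
    rcases mul_eq_zero.mp this with h' | h'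
    · exact hd h'
    · exact hu0 (inv_eq_zero.mp h')
  · intro v hv
    have hv1 : v ≠ 1 := (Finset.mem_erase.mp hv).1
    simp only [Finset.mem_erase, Finset.mem_univ, and_true]
    intro h
    rcases mul_eq_zero.mp h with h' | h'
    · exact hd h'
    · exact hv1 (by have := inv_eq_zero.mp h'; linear_combination this)
  · intro u hu
    have hu0 : u ≠ 0 := (Finset.mem_erase.mp hu).1
    field_simp
    simp [hd]
  · intro v hv
    have hv1 : v ≠ 1 := (Finset.mem_erase.mp hv).1
    have hv1' : v - 1 ≠ 0 := sub_ne_zero.mpr hv1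
    field_simp
    ring
  · intro u _; rfl

/-- Lemma B. -/
lemma chiB (x y : ZMod p) :
    ∑ c : ZMod p, χ p (x + c) * χ p (y + c) = if x = y then ((p : ℝ) - 1) else -1 := by
  split_ifs with h
  · subst h
    have e1 : ∑ c : ZMod p, χ p (x + c) * χ p (x + c) = ∑ u : ZMod p, χ p u * χ p u :=
      Fintype.sum_equiv (Equiv.addLeft x) _ _ (fun c => rfl)
    rw [e1]
    have e2 : ∀ u : ZMod p, χ p u * χ p u = if u = 0 then (0 : ℝ) else 1 := by
      intro u
      by_cases hu : u = 0
      · simp [hu, chi_zero]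
      · rw [chi_sq p hu, if_neg hu]
    rw [Finset.sum_congr rfl (fun u _ => e2 u)]
    exact sum_ind_ne p 0
  · have e1 : ∑ u : ZMod p, χ p u * χ p (u + (y - x)) =
        ∑ c : ZMod p, χ p (x + c) * χ p (y + c) := by
      refine Fintype.sum_bijective (fun u : ZMod p => u - x) ?_ _ _ ?_
      · exact (Equiv.subRight x).bijective
      · intro u
        have h1 : x + (u - x) = u := by ring
        have h2 : y + (u - x) = u + (y - x) := by ring
        rw [h1, h2]
    rw [← e1]
    exact chiA p hp (y - x) (sub_ne_zero.mpr (fun h' => h h'.symm))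

/-- The character sum `S(a,b)`. -/
noncomputable def Sr (a b : ZMod p) : ℝ := ∑ x : ZMod p, χ p (x * (x - a) * (x + 2 * b))

lemma Sr_zero_zero : Sr p 0 0 = 0 := by
  rw [Sr]
  have e : ∀ x : ZMod p, χ p (x * (x - 0) * (x + 2 * 0)) = χ p x := by
    intro x
    have h1 : x * (x - 0) * (x + 2 * 0) = x * x * x := by ring
    rw [h1]
    by_cases hx : x = 0
    · simp [hx]
    · rw [map_mul, map_mul, chi_sq p hx, one_mul]
  rw [Finset.sum_congr rfl (fun x _ => e x)]
  exact chi_sum p hp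

/-- The main character sum computation. -/
lemma sum_Sr_sq :
    ∑ a : ZMod p, ∑ b : ZMod p, (Sr p a b) ^ 2
      = (p : ℝ) * ((p : ℝ) - 1) * ((p : ℝ) - 2) := by
  have h2 : (2 : ZMod p) ≠ 0 := two_ne_zero' p hp
  have expand : ∀ a b : ZMod p, (Sr p a b) ^ 2 =
      ∑ x : ZMod p, ∑ y : ZMod p,
        (χ p x * χ p y) * ((χ p (x - a) * χ p (y - a)) *
          (χ p (x + 2 * b) * χ p (y + 2 * b))) := by
    intro a b
    rw [Sr, sq, Finset.sum_mul_sum]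
    refine Finset.sum_congr rfl fun x _ => Finset.sum_congr rfl fun y _ => ?_
    rw [map_mul, map_mul, map_mul, map_mul]
    ring
  have swap : ∀ G : ZMod p → ZMod p → ZMod p → ℝ,
      (∑ b : ZMod p, ∑ x : ZMod p, ∑ y : ZMod p, G b x y)
        = ∑ x : ZMod p, ∑ y : ZMod p, ∑ b : ZMod p, G b x y := by
    intro G
    rw [Finset.sum_comm]
    exact Finset.sum_congr rfl fun x _ => Finset.sum_comm
  set B : ZMod p → ZMod p → ℝ := fun x y => if x = y then ((p : ℝ) - 1) else -1 with hB
  have sumA : ∀ x y : ZMod p, ∑ a : ZMod p, χ p (x - a) * χ p (y - a) = B x y := by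
    intro x y
    simp only [hB]
    rw [← chiB p hp x y]
    refine Fintype.sum_equiv (Equiv.neg (ZMod p)) _ _ ?_
    intro a
    simp only [Equiv.neg_apply]
    rw [show x + -a = x - a by ring, show y + -a = y - a by ring]
  have sumB2 : ∀ x y : ZMod p, ∑ b : ZMod p, χ p (x + 2 * b) * χ p (y + 2 * b) = B x y := by
    intro x y
    simp only [hB]
    rw [← chiB p hp x y]
    exact Fintype.sum_equiv (Equiv.mulLeft₀ (2 : ZMod p) h2) _ _ (fun b => rfl)
  calc ∑ a : ZMod p, ∑ b : ZMod p, (Sr p a b) ^ 2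
      = ∑ a : ZMod p, ∑ x : ZMod p, ∑ y : ZMod p, ∑ b : ZMod p,
          (χ p x * χ p y) * ((χ p (x - a) * χ p (y - a)) *
            (χ p (x + 2 * b) * χ p (y + 2 * b))) := by
        refine Finset.sum_congr rfl fun a _ => ?_
        rw [← swap]
        exact Finset.sum_congr rfl fun b _ => expand a b
    _ = ∑ x : ZMod p, ∑ y : ZMod p, ∑ a : ZMod p, ∑ b : ZMod p,
          (χ p x * χ p y) * ((χ p (x - a) * χ p (y - a)) *
            (χ p (x + 2 * b) * χ p (y + 2 * b))) := swap _
    _ = ∑ x : ZMod p, ∑ y : ZMod p, (χ p x * χ p y) * (B x y * B x y) := by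
        refine Finset.sum_congr rfl fun x _ => Finset.sum_congr rfl fun y _ => ?_
        have hrw : (χ p x * χ p y) * (B x y * B x y)
            = (χ p x * χ p y) * ((∑ a : ZMod p, χ p (x - a) * χ p (y - a)) *
              (∑ b : ZMod p, χ p (x + 2 * b) * χ p (y + 2 * b))) := by
          rw [sumA x y, sumB2 x y]
        rw [hrw, Finset.sum_mul_sum, Finset.mul_sum]
        exact Finset.sum_congr rfl fun a _ => by rw [Finset.mul_sum]
    _ = ∑ x : ZMod p, (χ p x * χ p x) * (((p : ℝ) - 1) ^ 2 - 1) := by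
        refine Finset.sum_congr rfl fun x _ => ?_
        rw [← Finset.add_sum_erase Finset.univ _ (Finset.mem_univ x)]
        have hxx : B x x = (p : ℝ) - 1 := by simp [hB]
        have hrest : ∑ y ∈ Finset.univ.erase x, (χ p x * χ p y) * (B x y * B x y)
            = χ p x * ∑ y ∈ Finset.univ.erase x, χ p y := by
          rw [Finset.mul_sum]
          refine Finset.sum_congr rfl fun y hy => ?_
          have hxy : x ≠ y := fun h => (Finset.mem_erase.mp hy).1 h.symm
          have : B x y = -1 := by simp [hB, hxy]
          rw [this]; ring
        have herase : ∑ y ∈ Finset.univ.erase x, χ p y = -(χ p x) := by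
          have h := Finset.add_sum_erase Finset.univ (χ p) (Finset.mem_univ x)
          rw [chi_sum p hp] at h
          linarith
        rw [hxx, hrest, herase]
        ring
    _ = ((p : ℝ) - 1) * (((p : ℝ) - 1) ^ 2 - 1) := by
        rw [← Finset.sum_mul]
        congr 1
        have e2 : ∀ u : ZMod p, χ p u * χ p u = if u = 0 then (0 : ℝ) else 1 := by
          intro u
          by_cases hu : u = 0
          · simp [hu, chi_zero]
          · rw [chi_sq p hu, if_neg hu]
        rw [Finset.sum_congr rfl (fun u _ => e2 u)]
        exact sum_ind_ne p 0
    _ = (p : ℝ) * ((p : ℝ) - 1) * ((p : ℝ) - 2) := by ring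

/-- Counting the good pairs. -/
lemma count_good :
    ∑ a : ZMod p, ∑ b : ZMod p, (if a * b * (a + 2 * b) = 0 then (0 : ℝ) else 1)
      = ((p : ℝ) - 1) * ((p : ℝ) - 2) := by
  have h2 : (2 : ZMod p) ≠ 0 := two_ne_zero' p hp
  have inner : ∀ a : ZMod p,
      (∑ b : ZMod p, (if a * b * (a + 2 * b) = 0 then (0 : ℝ) else 1))
        = if a = 0 then 0 else ((p : ℝ) - 2) := by
    intro a
    by_cases ha : a = 0
    · subst ha; simp
    · rw [if_neg ha]
      set c : ZMod p := -(a * 2⁻¹) with hc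
      have hinv : (2 : ZMod p) * 2⁻¹ = 1 := mul_inv_cancel₀ h2
      have hc0 : c ≠ 0 := by
        intro h
        rw [hc, neg_eq_zero, mul_eq_zero] at h
        rcases h with h | h
        · exact ha h
        · exact (inv_ne_zero h2) h
      have cond : ∀ b : ZMod p, (a * b * (a + 2 * b) = 0) ↔ (b = 0 ∨ b = c) := by
        intro b
        rw [mul_eq_zero, mul_eq_zero]
        constructor
        · rintro ((h | h) | h)
          · exact absurd h ha
          · exact Or.inl h
          · exact Or.inr (by rw [hc]; linear_combination 2⁻¹ * h - b * hinv)
        · rintro (h | h)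
          · exact Or.inl (Or.inr h)
          · exact Or.inr (by rw [h, hc]; linear_combination (-a) * hinv)
      have e : ∀ b : ZMod p, (if a * b * (a + 2 * b) = 0 then (0 : ℝ) else 1)
          = 1 - (if b = 0 then (1 : ℝ) else 0) - (if b = c then (1 : ℝ) else 0) := by
        intro b
        simp only [cond b]
        by_cases hb0 : b = 0
        · have hbc : b ≠ c := fun h => hc0 (h ▸ hb0 ▸ rfl)
          rw [if_pos (Or.inl hb0), if_pos hb0, if_neg (by rw [hb0]; exact fun h => hc0 h.symm)]
          norm_num
        · by_cases hbc : b = c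
          · rw [if_pos (Or.inr hbc), if_neg hb0, if_pos hbc]; norm_num
          · rw [if_neg (by tauto), if_neg hb0, if_neg hbc]; norm_num
      rw [Finset.sum_congr rfl (fun b _ => e b)]
      rw [Finset.sum_sub_distrib, Finset.sum_sub_distrib]
      rw [Finset.sum_ite_eq' Finset.univ (0 : ZMod p) (fun _ => (1 : ℝ))]
      rw [Finset.sum_ite_eq' Finset.univ c (fun _ => (1 : ℝ))]
      simp [Finset.card_univ, ZMod.card]
      ring
  rw [Finset.sum_congr rfl (fun a _ => inner a)]
  have e : ∀ a : ZMod p, (if a = 0 then (0 : ℝ) else ((p : ℝ) - 2))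
      = ((p : ℝ) - 2) - (if a = 0 then ((p : ℝ) - 2) else 0) := by
    intro a
    by_cases ha : a = 0 <;> simp [ha]
  rw [Finset.sum_congr rfl (fun a _ => e a)]
  rw [Finset.sum_sub_distrib]
  rw [Finset.sum_ite_eq' Finset.univ (0 : ZMod p) (fun _ => ((p : ℝ) - 2))]
  simp [Finset.card_univ, ZMod.card, nsmul_eq_mul]
  ring

end Stmt3Aux

/-- For an odd prime `p`, define `λ_{a,b}(p²)` by: `0` if `(a,b) = (0,0)`;
`λ_{a,b}(p)² = S(a,b)²/p` if `a·b·(a+2b) ≡ 0 (mod p)` but `(a,b) ≠ (0,0)`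
(multiplicative reduction); and `λ_{a,b}(p)² - 1 = S(a,b)²/p - 1` if
`a·b·(a+2b) ≢ 0 (mod p)` (good reduction), where
`S(a,b) = Σ_{x mod p} ((x(x-a)(x+2b))/p)` and `λ_{a,b}(p) = -p^{-1/2} S(a,b)`.
Then `Σ_{a,b mod p} λ_{a,b}(p²) = 0`. -/
theorem stmt_3 (p : ℕ) [Fact p.Prime] (hp : p ≠ 2) :
    ∑ a : ZMod p, ∑ b : ZMod p,
      (if a = 0 ∧ b = 0 then (0 : ℝ)
       else if a * b * (a + 2*b) = 0 then
         (∑ x : ZMod p, (legendreSym p ((x * (x - a) * (x + 2*b)).val) : ℝ))^2 / p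
       else
         (∑ x : ZMod p, (legendreSym p ((x * (x - a) * (x + 2*b)).val) : ℝ))^2 / p - 1)
      = 0 := by
  open Stmt3Aux in
  have hp0 : (p : ℝ) ≠ 0 := by
    exact_mod_cast (Fact.out (p := p.Prime)).ne_zero
  have hleg : ∀ a b : ZMod p,
      (∑ x : ZMod p, (legendreSym p ((x * (x - a) * (x + 2*b)).val) : ℝ)) = Sr p a b := by
    intro a b
    exact Finset.sum_congr rfl fun x _ => leg_eq p _
  have key : ∀ a b : ZMod p,
      (if a = 0 ∧ b = 0 then (0 : ℝ)
       else if a * b * (a + 2*b) = 0 then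
         (∑ x : ZMod p, (legendreSym p ((x * (x - a) * (x + 2*b)).val) : ℝ))^2 / p
       else
         (∑ x : ZMod p, (legendreSym p ((x * (x - a) * (x + 2*b)).val) : ℝ))^2 / p - 1)
      = (Sr p a b) ^ 2 / p - (if a * b * (a + 2 * b) = 0 then (0 : ℝ) else 1) := by
    intro a b
    rw [hleg a b]
    by_cases h00 : a = 0 ∧ b = 0
    · obtain ⟨ha, hb⟩ := h00
      subst ha; subst hb
      rw [if_pos ⟨rfl, rfl⟩, if_pos (by ring), Sr_zero_zero p hp]
      norm_num
    · rw [if_neg h00]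
      by_cases hcond : a * b * (a + 2 * b) = 0
      · rw [if_pos hcond, if_pos hcond]
        ring
      · rw [if_neg hcond, if_neg hcond]
  calc ∑ a : ZMod p, ∑ b : ZMod p,
      (if a = 0 ∧ b = 0 then (0 : ℝ)
       else if a * b * (a + 2*b) = 0 then
         (∑ x : ZMod p, (legendreSym p ((x * (x - a) * (x + 2*b)).val) : ℝ))^2 / p
       else
         (∑ x : ZMod p, (legendreSym p ((x * (x - a) * (x + 2*b)).val) : ℝ))^2 / p - 1)
      = ∑ a : ZMod p, ∑ b : ZMod p,
          ((Sr p a b) ^ 2 / p - (if a * b * (a + 2 * b) = 0 then (0 : ℝ) else 1)) := by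
        exact Finset.sum_congr rfl fun a _ => Finset.sum_congr rfl fun b _ => key a b
    _ = (∑ a : ZMod p, ∑ b : ZMod p, (Sr p a b) ^ 2) / p
        - ∑ a : ZMod p, ∑ b : ZMod p, (if a * b * (a + 2 * b) = 0 then (0 : ℝ) else 1) := by
        rw [Finset.sum_div]
        rw [← Finset.sum_sub_distrib]
        refine Finset.sum_congr rfl fun a _ => ?_
        rw [Finset.sum_div, ← Finset.sum_sub_distrib]
    _ = 0 := by
        rw [sum_Sr_sq p hp, count_good p hp]
        field_simp
        ring
end

section
/- Let p be an odd prime. Define T(a,b) = Σ_{x mod p} ((x(x²+2ax-b))/p) with (·/p) the Legendre symbol. Then Σ_{a mod p} Σ_{b mod p} T(a,b)² = p(p-1)². -/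
open Finset

section aux

variable {p : ℕ} [Fact p.Prime] (hp : p ≠ 2)

private lemma hF' (hp : p ≠ 2) : ringChar (ZMod p) ≠ 2 := by
  rw [ZMod.ringChar_zmod_n]; exact hp

/-- `∑ b, χ b * χ b = p - 1`. -/
private lemma sum_sq_char (hp : p ≠ 2) :
    ∑ b : ZMod p, (quadraticChar (ZMod p) b * quadraticChar (ZMod p) b : ℤ) = (p : ℤ) - 1 := by
  have hp1 : 1 ≤ p := (Fact.out : p.Prime).one_lt.le
  calc ∑ b : ZMod p, (quadraticChar (ZMod p) b * quadraticChar (ZMod p) b : ℤ)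
      = ∑ b : ZMod p, (if b = 0 then (0 : ℤ) else 1) := by
        refine Finset.sum_congr rfl fun b _ => ?_
        by_cases hb : b = 0
        · simp [hb]
        · rw [← sq, quadraticChar_sq_one hb]; simp [hb]
    _ = (p : ℤ) - 1 := by
        rw [Finset.sum_ite, Finset.sum_const, Finset.sum_const]
        simp only [smul_zero, zero_add, nsmul_eq_mul, mul_one]
        rw [Finset.filter_ne', Finset.card_erase_of_mem (Finset.mem_univ _)]
        simp [ZMod.card, Nat.cast_sub hp1]

/-- key shifted sum: for `d ≠ 0`, `∑ b, χ b * χ (b + d) = -1`. -/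
private lemma sum_shift (hp : p ≠ 2) {d : ZMod p} (hd : d ≠ 0) :
    ∑ b : ZMod p, (quadraticChar (ZMod p) b * quadraticChar (ZMod p) (b + d) : ℤ) = -1 := by
  set χ := quadraticChar (ZMod p) with hχ
  have h0 : ∑ b : ZMod p, (χ b * χ (b + d) : ℤ)
      = ∑ b ∈ Finset.univ.erase (0 : ZMod p), (χ b * χ (b + d) : ℤ) := by
    refine (Finset.sum_erase _ ?_).symm
    simp [hχ]
  rw [h0]
  have h1 : ∑ b ∈ Finset.univ.erase (0 : ZMod p), (χ b * χ (b + d) : ℤ)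
      = ∑ t ∈ Finset.univ.erase (1 : ZMod p), (χ t : ℤ) := by
    refine Finset.sum_nbij' (fun b => 1 + d * b⁻¹) (fun t => d * (t - 1)⁻¹) ?_ ?_ ?_ ?_ ?_
    · intro b hb
      have hb0 : b ≠ 0 := (Finset.mem_erase.mp hb).1
      simp only [Finset.mem_erase, Finset.mem_univ, and_true]
      intro h
      have : d * b⁻¹ = 0 := by linear_combination h
      rcases mul_eq_zero.mp this with h' | h'
      · exact hd h'
      · exact hb0 (inv_eq_zero.mp h')
    · intro t ht
      have ht1 : t ≠ 1 := (Finset.mem_erase.mp ht).1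
      have : t - 1 ≠ 0 := sub_ne_zero.mpr ht1
      simp only [Finset.mem_erase, Finset.mem_univ, and_true]
      exact mul_ne_zero hd (inv_ne_zero this)
    · intro b hb
      have hb0 : b ≠ 0 := (Finset.mem_erase.mp hb).1
      have hdb : d * b⁻¹ ≠ 0 := mul_ne_zero hd (inv_ne_zero hb0)
      field_simp
      simp [hd]
    · intro t ht
      have ht1 : t - 1 ≠ 0 := sub_ne_zero.mpr (Finset.mem_erase.mp ht).1
      field_simp
      ring
    · intro b hb
      have hb0 : b ≠ 0 := (Finset.mem_erase.mp hb).1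
      have key : b * (b + d) = b ^ 2 * (1 + d * b⁻¹) := by
        field_simp
      calc (χ b * χ (b + d) : ℤ) = χ (b * (b + d)) := (map_mul χ _ _).symm
        _ = χ (b ^ 2 * (1 + d * b⁻¹)) := by rw [key]
        _ = χ (b ^ 2) * χ (1 + d * b⁻¹) := map_mul χ _ _
        _ = χ (1 + d * b⁻¹) := by rw [hχ, quadraticChar_sq_one' hb0, one_mul]
  rw [h1]
  have h2 : (χ 1 : ℤ) + ∑ t ∈ Finset.univ.erase (1 : ZMod p), (χ t : ℤ)
      = ∑ t : ZMod p, (χ t : ℤ) := Finset.add_sum_erase _ _ (Finset.mem_univ _)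
  have h3 : ∑ t : ZMod p, (χ t : ℤ) = 0 := quadraticChar_sum_zero (hF' hp)
  have h4 : (χ 1 : ℤ) = 1 := by simp [hχ]
  linarith [h2]

/-- `∑ b, χ (u - b) * χ (v - b) = if u = v then p - 1 else -1`. -/
private lemma sum_two_shift (hp : p ≠ 2) (u v : ZMod p) :
    ∑ b : ZMod p, (quadraticChar (ZMod p) (u - b) * quadraticChar (ZMod p) (v - b) : ℤ)
      = if u = v then (p : ℤ) - 1 else -1 := by
  set χ := quadraticChar (ZMod p) with hχ
  have h0 : ∑ b : ZMod p, (χ (u - b) * χ (v - b) : ℤ)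
      = ∑ b : ZMod p, (χ b * χ (b + (v - u)) : ℤ) := by
    refine Fintype.sum_equiv (Equiv.subLeft u) _ _ fun b => ?_
    have e0 : (Equiv.subLeft u) b = u - b := rfl
    rw [e0]
    congr 1
    ring
  rw [h0]
  by_cases huv : u = v
  · simp only [huv, if_true, sub_self, add_zero]
    exact sum_sq_char hp
  · rw [if_neg huv]
    exact sum_shift hp (sub_ne_zero.mpr (Ne.symm huv))

end aux

/-- Second moment for the family `F₂`: for an odd prime `p`, with
`T(a,b) = Σ_{x mod p} ((x(x²+2ax-b))/p)`, one has
`Σ_{a,b mod p} T(a,b)² = p(p-1)²`. -/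
theorem stmt_4 (p : ℕ) [Fact p.Prime] (hp : p ≠ 2) :
    ∑ a : ZMod p, ∑ b : ZMod p,
      (∑ x : ZMod p, (legendreSym p ((x * (x^2 + 2*a*x - b)).val) : ℤ)) ^ 2
      = (p : ℤ) * (p - 1)^2 := by
  have hprime : p.Prime := Fact.out
  set χ := quadraticChar (ZMod p) with hχ
  have h0 : ∀ z : ZMod p, (legendreSym p (z.val : ℤ) : ℤ) = χ z := by
    intro z
    simp [legendreSym, hχ, ZMod.natCast_val, ZMod.cast_id]
  simp_rw [h0]
  -- expand the square
  have expand : ∀ a b : ZMod p,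
      (∑ x : ZMod p, (χ (x * (x^2 + 2*a*x - b)) : ℤ)) ^ 2
      = ∑ x : ZMod p, ∑ y : ZMod p,
          (χ x * χ y : ℤ) * (χ (x^2 + 2*a*x - b) * χ (y^2 + 2*a*y - b)) := by
    intro a b
    rw [sq, Finset.sum_mul_sum]
    refine Finset.sum_congr rfl fun x _ => Finset.sum_congr rfl fun y _ => ?_
    rw [map_mul, map_mul]
    ring
  simp_rw [expand]
  -- swap summation order helper
  have swap3 : ∀ (g : ZMod p → ZMod p → ZMod p → ℤ),
      ∑ b : ZMod p, ∑ x : ZMod p, ∑ y : ZMod p, g b x y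
      = ∑ x : ZMod p, ∑ y : ZMod p, ∑ b : ZMod p, g b x y := by
    intro g
    rw [Finset.sum_comm]
    exact Finset.sum_congr rfl fun x _ => Finset.sum_comm
  -- move b innermost, apply sum_two_shift
  have step1 : ∀ a : ZMod p,
      ∑ b : ZMod p, ∑ x : ZMod p, ∑ y : ZMod p,
          (χ x * χ y : ℤ) * (χ (x^2 + 2*a*x - b) * χ (y^2 + 2*a*y - b))
      = ∑ x : ZMod p, ∑ y : ZMod p,
          (χ x * χ y : ℤ) * (if x^2 + 2*a*x = y^2 + 2*a*y then (p : ℤ) - 1 else -1) := by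
    intro a
    rw [swap3]
    refine Finset.sum_congr rfl fun x _ => Finset.sum_congr rfl fun y _ => ?_
    rw [← Finset.mul_sum]
    congr 1
    exact sum_two_shift hp (x^2 + 2*a*x) (y^2 + 2*a*y)
  simp_rw [step1]
  rw [swap3]
  -- inner sum over a
  have h2ne : (2 : ZMod p) ≠ 0 := by
    have : ((2 : ℕ) : ZMod p) ≠ 0 := by
      rw [Ne, ZMod.natCast_eq_zero_iff]
      intro h
      rcases (Nat.prime_dvd_prime_iff_eq hprime Nat.prime_two).mp h with rfl
      exact hp rfl
    simpa using this
  have step2 : ∀ x y : ZMod p,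
      ∑ a : ZMod p, (χ x * χ y : ℤ) * (if x^2 + 2*a*x = y^2 + 2*a*y then (p : ℤ) - 1 else -1)
      = (χ x * χ y : ℤ) * (if x = y then (p : ℤ) * ((p : ℤ) - 1) else 0) := by
    intro x y
    rw [← Finset.mul_sum]
    congr 1
    by_cases hxy : x = y
    · subst hxy
      simp [Finset.card_univ, ZMod.card]
      ring
    · rw [if_neg hxy]
      have hcond : ∀ a : ZMod p, (x^2 + 2*a*x = y^2 + 2*a*y) ↔ a = -(x + y) / 2 := by
        intro a
        constructor
        · intro h
          have hfac : (x - y) * (x + y + 2*a) = 0 := by linear_combination h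
          rcases mul_eq_zero.mp hfac with h' | h'
          · exact absurd (sub_eq_zero.mp h') hxy
          · field_simp
            linear_combination h'
        · intro h
          subst h
          field_simp
          ring
      simp_rw [hcond]
      have split : ∀ a : ZMod p, (if a = -(x + y)/2 then (p : ℤ) - 1 else -1)
          = -1 + (if a = -(x + y)/2 then (p : ℤ) else 0) := by
        intro a; split <;> ring
      simp_rw [split]
      rw [Finset.sum_add_distrib, Finset.sum_const, Finset.sum_ite_eq' Finset.univ]
      simp [Finset.card_univ, ZMod.card]
  simp_rw [step2]
  -- sum over y: only y = x survives
  have step3 : ∀ x : ZMod p,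
      ∑ y : ZMod p, (χ x * χ y : ℤ) * (if x = y then (p : ℤ) * ((p : ℤ) - 1) else 0)
      = (χ x * χ x : ℤ) * ((p : ℤ) * ((p : ℤ) - 1)) := by
    intro x
    rw [Finset.sum_eq_single x]
    · simp
    · intro y _ hyx
      rw [if_neg (fun h => hyx h.symm), mul_zero]
    · intro h; exact absurd (Finset.mem_univ x) h
  simp_rw [step3]
  rw [← Finset.sum_mul, sum_sq_char hp]
  ring
end
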